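/- Let 1 < p ≤ ∞ with conjugate p', and 0 < q < p'. Let ρ = (ρ_j)_{j≥1} satisfy ρ_j > 1 for all j and (ρ_j^{-1})_{j≥1} ∈ ℓ_q(ℕ). Set θ := 1 − q/p' and κ_j := ρ_j^θ. Then for any family (a_ν)_{ν∈F} of nonnegative reals one has Σ_{ν∈F} κ^ν a_ν ≤ ‖(ρ^ν a_ν)_{ν∈F}‖_{ℓ_p(F)} · (Σ_{ν∈F} ρ^{−qν})^{1/p'}, and the factor (Σ_{ν∈F} ρ^{−qν})^{1/p'} is finite. In particular, any function in the class B_{ρ,p} belongs to B_{κ,1}. -/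

import Mathlib

open scoped BigOperators ENNReal

noncomputable section

/-- The set `F` of finitely supported multi-indices. -/
abbrev MIdx : Type := ℕ →₀ ℕ

/-- `ρ^ν := ∏_j ρ_j^{ν_j}` for a finitely supported multi-index `ν`. -/
def mpow (ρ : ℕ → ℝ) (ν : MIdx) : ℝ := ν.prod fun j k => ρ j ^ k

/-- The `ℓ_p(F)` norm (`p ∈ [1,∞]`, valued in `ℝ≥0∞`) of a family of nonnegative reals. -/
def lpF (p : ℝ≥0∞) (a : MIdx → ℝ) : ℝ≥0∞ :=
  if p = ∞ then ⨆ ν, ENNReal.ofReal (a ν)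
  else (∑' ν, ENNReal.ofReal (a ν) ^ p.toReal) ^ (1 / p.toReal)

lemma mpow_nonneg {r : ℕ → ℝ} (h0 : ∀ j, 0 ≤ r j) (ν : MIdx) : 0 ≤ mpow r ν :=
  Finset.prod_nonneg fun j _ => pow_nonneg (h0 j) _

lemma mpow_pos {r : ℕ → ℝ} (h0 : ∀ j, 0 < r j) (ν : MIdx) : 0 < mpow r ν :=
  Finset.prod_pos fun j _ => pow_pos (h0 j) _

lemma mpow_rpow {r : ℕ → ℝ} (h0 : ∀ j, 0 ≤ r j) (θ : ℝ) (ν : MIdx) :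
    mpow (fun j => r j ^ θ) ν = mpow r ν ^ θ := by
  unfold mpow Finsupp.prod
  rw [← Real.finset_prod_rpow _ _ (fun j _ => pow_nonneg (h0 j) _) θ]
  apply Finset.prod_congr rfl
  intro j _
  show (r j ^ θ) ^ ν j = (r j ^ ν j) ^ θ
  rw [← Real.rpow_natCast (r j ^ θ) (ν j), ← Real.rpow_natCast (r j) (ν j),
    ← Real.rpow_mul (h0 j), ← Real.rpow_mul (h0 j), mul_comm]

lemma mpow_inv (r : ℕ → ℝ) (ν : MIdx) : (mpow r ν)⁻¹ = mpow (fun j => (r j)⁻¹) ν := by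
  unfold mpow Finsupp.prod
  rw [← Finset.prod_inv_distrib]
  exact Finset.prod_congr rfl fun j _ => (inv_pow (r j) (ν j)).symm

lemma mpow_eq_prod_range {r : ℕ → ℝ} {ν : MIdx} {n : ℕ} (h : ∀ j, ν j ≠ 0 → j < n) :
    mpow r ν = ∏ j ∈ Finset.range n, r j ^ ν j := by
  refine Finsupp.prod_of_support_subset ν ?_ _ ?_
  · intro j hj
    exact Finset.mem_range.2 (h j (Finsupp.mem_support_iff.1 hj))
  · intro j _
    exact pow_zero _

lemma one_sub_sum_le_prod_one_sub (r : ℕ → ℝ) (h0 : ∀ j, 0 ≤ r j) (h1 : ∀ j, r j ≤ 1)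
    (s : Finset ℕ) : 1 - ∑ j ∈ s, r j ≤ ∏ j ∈ s, (1 - r j) := by
  induction s using Finset.cons_induction with
  | empty => simp
  | cons a s ha ih =>
    rw [Finset.prod_cons, Finset.sum_cons]
    have hs : 0 ≤ ∑ j ∈ s, r j := Finset.sum_nonneg fun j _ => h0 j
    have h2 : (1 - r a) * (1 - ∑ j ∈ s, r j) ≤ (1 - r a) * ∏ j ∈ s, (1 - r j) :=
      mul_le_mul_of_nonneg_left ih (by linarith [h1 a])
    nlinarith [mul_nonneg (h0 a) hs]

lemma sum_mpow_le (r : ℕ → ℝ) (h0 : ∀ j, 0 ≤ r j) :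
    ∀ (n m : ℕ) (S : Finset MIdx),
      (∀ ν ∈ S, ∀ j, ν j ≠ 0 → j < n) → (∀ ν ∈ S, ∀ j, ν j < m) →
      ∑ ν ∈ S, mpow r ν ≤ ∏ j ∈ Finset.range n, ∑ k ∈ Finset.range m, r j ^ k := by
  intro n
  induction n with
  | zero =>
    intro m S hsupp _
    have hsub : S ⊆ {0} := by
      intro ν hν
      rw [Finset.mem_singleton]
      refine Finsupp.ext fun j => ?_
      rw [Finsupp.coe_zero, Pi.zero_apply]
      by_contra hj
      exact absurd (hsupp ν hν j hj) (Nat.not_lt_zero j)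
    calc ∑ ν ∈ S, mpow r ν
        ≤ ∑ ν ∈ ({0} : Finset MIdx), mpow r ν :=
          Finset.sum_le_sum_of_subset_of_nonneg hsub fun ν _ _ => mpow_nonneg h0 ν
      _ = 1 := by simp [mpow]
      _ = _ := by simp
  | succ n ih =>
    intro m S hsupp hval
    classical
    have hfib := Finset.sum_fiberwise_of_maps_to (g := fun ν : MIdx => ν n)
      (t := Finset.range m) (s := S)
      (fun ν hν => Finset.mem_range.2 (hval ν hν n)) (fun ν => mpow r ν)
    rw [← hfib, Finset.prod_range_succ, Finset.mul_sum]
    apply Finset.sum_le_sum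
    intro k hk
    have hm0 : k < m := Finset.mem_range.1 hk
    set Sk := S.filter (fun ν : MIdx => ν n = k) with hSk
    have hmem : ∀ ν ∈ Sk, ν ∈ S ∧ ν n = k := fun ν hν => Finset.mem_filter.1 hν
    have hsplit : ∀ ν ∈ Sk, mpow r ν = mpow r (ν.erase n) * r n ^ k := by
      intro ν hν
      obtain ⟨hνS, hνn⟩ := hmem ν hν
      have e1 : mpow r ν = ∏ j ∈ Finset.range (n + 1), r j ^ ν j :=
        mpow_eq_prod_range (hsupp ν hνS)
      have e2 : mpow r (ν.erase n) = ∏ j ∈ Finset.range n, r j ^ ν j := by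
        rw [mpow_eq_prod_range (n := n) ?_]
        · refine Finset.prod_congr rfl fun j hj => ?_
          rw [Finsupp.erase_ne (ne_of_lt (Finset.mem_range.1 hj))]
        · intro j hj
          by_cases hjn : j = n
          · subst hjn
            rw [Finsupp.erase_same] at hj
            exact absurd rfl hj
          · rw [Finsupp.erase_ne hjn] at hj
            have := hsupp ν hνS j hj
            omega
      rw [e1, Finset.prod_range_succ, e2, hνn]
    rw [Finset.sum_congr rfl hsplit, ← Finset.sum_mul]
    refine mul_le_mul_of_nonneg_right ?_ (pow_nonneg (h0 n) k)
    have hinj : ∀ ν ∈ Sk, ∀ ν' ∈ Sk, ν.erase n = ν'.erase n → ν = ν' := by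
      intro ν hν ν' hν' hee
      obtain ⟨_, hn1⟩ := hmem ν hν
      obtain ⟨_, hn2⟩ := hmem ν' hν'
      refine Finsupp.ext fun j => ?_
      by_cases hjn : j = n
      · subst hjn; rw [hn1, hn2]
      · calc ν j = (ν.erase n) j := (Finsupp.erase_ne hjn).symm
          _ = (ν'.erase n) j := by rw [hee]
          _ = ν' j := Finsupp.erase_ne hjn
    rw [← Finset.sum_image (f := mpow r) (g := fun ν : MIdx => Finsupp.erase n ν) hinj]
    refine ih m _ ?_ ?_
    · intro μ hμ j hj
      obtain ⟨ν, hνSk, rfl⟩ := Finset.mem_image.1 hμ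
      obtain ⟨hνS, _⟩ := hmem ν hνSk
      by_cases hjn : j = n
      · subst hjn
        rw [Finsupp.erase_same] at hj
        exact absurd rfl hj
      · rw [Finsupp.erase_ne hjn] at hj
        have := hsupp ν hνS j hj
        omega
    · intro μ hμ j
      obtain ⟨ν, hνSk, rfl⟩ := Finset.mem_image.1 hμ
      obtain ⟨hνS, _⟩ := hmem ν hνSk
      by_cases hjn : j = n
      · subst hjn
        rw [Finsupp.erase_same]
        omega
      · rw [Finsupp.erase_ne hjn]
        exact hval ν hνS j

lemma exists_prod_bound (r : ℕ → ℝ) (h0 : ∀ j, 0 ≤ r j) (h1 : ∀ j, r j < 1)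
    (hs : Summable r) : ∃ C : ℝ, ∀ n, ∏ j ∈ Finset.range n, (1 - r j)⁻¹ ≤ C := by
  have hpos : ∀ j, 0 < 1 - r j := fun j => sub_pos.2 (h1 j)
  obtain ⟨N, hN⟩ : ∃ N, ∑' k, r (k + N) < 1 / 2 :=
    ((tendsto_sum_nat_add r).eventually (gt_mem_nhds (by norm_num : (0 : ℝ) < 1 / 2))).exists
  have hone_le : ∀ j, (1 : ℝ) ≤ (1 - r j)⁻¹ := by
    intro j
    have h2 : 1 - r j ≤ 1 := by linarith [h0 j]
    simpa using inv_anti₀ (hpos j) h2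
  have hprodN_nonneg : 0 ≤ ∏ j ∈ Finset.range N, (1 - r j)⁻¹ :=
    Finset.prod_nonneg fun j _ => (inv_pos.2 (hpos j)).le
  refine ⟨(∏ j ∈ Finset.range N, (1 - r j)⁻¹) * 2, fun n => ?_⟩
  rcases le_or_gt n N with h | h
  · have hge1 : (1 : ℝ) ≤ ∏ j ∈ Finset.Ico n N, (1 - r j)⁻¹ := by
      have hpp := Finset.prod_le_prod (s := Finset.Ico n N) (f := fun _ => (1 : ℝ))
        (g := fun j => (1 - r j)⁻¹) (fun j _ => zero_le_one) fun j _ => hone_le j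
      simpa using hpp
    have hnn : 0 ≤ ∏ j ∈ Finset.range n, (1 - r j)⁻¹ :=
      Finset.prod_nonneg fun j _ => (inv_pos.2 (hpos j)).le
    have h2 : ∏ j ∈ Finset.range n, (1 - r j)⁻¹ ≤ ∏ j ∈ Finset.range N, (1 - r j)⁻¹ := by
      calc ∏ j ∈ Finset.range n, (1 - r j)⁻¹
          = (∏ j ∈ Finset.range n, (1 - r j)⁻¹) * 1 := by ring
        _ ≤ (∏ j ∈ Finset.range n, (1 - r j)⁻¹) * ∏ j ∈ Finset.Ico n N, (1 - r j)⁻¹ :=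
            mul_le_mul_of_nonneg_left hge1 hnn
        _ = ∏ j ∈ Finset.range N, (1 - r j)⁻¹ := Finset.prod_range_mul_prod_Ico _ h
    linarith
  · rw [← Finset.prod_range_mul_prod_Ico _ h.le]
    refine mul_le_mul_of_nonneg_left ?_ hprodN_nonneg
    have hsum : ∑ j ∈ Finset.Ico N n, r j ≤ 1 / 2 := by
      rw [Finset.sum_Ico_eq_sum_range]
      have hss : Summable fun k => r (k + N) := (summable_nat_add_iff N).2 hs
      calc ∑ k ∈ Finset.range (n - N), r (N + k)
          = ∑ k ∈ Finset.range (n - N), r (k + N) := by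
            refine Finset.sum_congr rfl fun k _ => by rw [add_comm]
        _ ≤ ∑' k, r (k + N) := Summable.sum_le_tsum _ (fun k _ => h0 _) hss
        _ ≤ 1 / 2 := hN.le
    have hW : 1 - ∑ j ∈ Finset.Ico N n, r j ≤ ∏ j ∈ Finset.Ico N n, (1 - r j) :=
      one_sub_sum_le_prod_one_sub r h0 (fun j => (h1 j).le) _
    have hhalf : (1 : ℝ) / 2 ≤ ∏ j ∈ Finset.Ico N n, (1 - r j) := by linarith
    rw [Finset.prod_inv_distrib]
    calc (∏ j ∈ Finset.Ico N n, (1 - r j))⁻¹ ≤ ((1 : ℝ) / 2)⁻¹ :=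
          inv_anti₀ (by norm_num) hhalf
      _ = 2 := by norm_num

lemma summable_mpow (r : ℕ → ℝ) (h0 : ∀ j, 0 ≤ r j) (h1 : ∀ j, r j < 1)
    (hs : Summable r) : Summable fun ν : MIdx => mpow r ν := by
  obtain ⟨C, hC⟩ := exists_prod_bound r h0 h1 hs
  refine summable_of_sum_le (c := C) (fun ν => mpow_nonneg h0 ν) fun u => ?_
  set n := (u.sup fun ν : MIdx => ν.support.sup id) + 1 with hn
  set m := (u.sup fun ν : MIdx => ν.support.sup ν) + 1 with hm
  have h2 : ∀ ν ∈ u, ∀ j, ν j ≠ 0 → j < n := by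
    intro ν hν j hj
    have hjs : j ∈ ν.support := Finsupp.mem_support_iff.2 hj
    have ha : j ≤ ν.support.sup id := Finset.le_sup (f := id) hjs
    have hb : ν.support.sup id ≤ u.sup fun ν : MIdx => ν.support.sup id :=
      Finset.le_sup (f := fun ν : MIdx => ν.support.sup id) hν
    omega
  have h3 : ∀ ν ∈ u, ∀ j, ν j < m := by
    intro ν hν j
    by_cases hj : ν j = 0
    · omega
    · have hjs : j ∈ ν.support := Finsupp.mem_support_iff.2 hj
      have ha : ν j ≤ ν.support.sup ν := Finset.le_sup hjs
      have hb : ν.support.sup ν ≤ u.sup fun ν : MIdx => ν.support.sup ν :=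
        Finset.le_sup (f := fun ν : MIdx => ν.support.sup ν) hν
      omega
  calc ∑ ν ∈ u, mpow r ν
      ≤ ∏ j ∈ Finset.range n, ∑ k ∈ Finset.range m, r j ^ k := sum_mpow_le r h0 n m u h2 h3
    _ ≤ ∏ j ∈ Finset.range n, (1 - r j)⁻¹ := by
        refine Finset.prod_le_prod ?_ ?_
        · intro j _
          exact Finset.sum_nonneg fun k _ => pow_nonneg (h0 j) k
        · intro j _
          have h4 := Summable.sum_le_tsum (Finset.range m) (fun k _ => pow_nonneg (h0 j) k)
            (summable_geometric_of_lt_one (h0 j) (h1 j))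
          rwa [tsum_geometric_of_lt_one (h0 j) (h1 j)] at h4
    _ ≤ C := hC n

lemma one_lt_toReal_of_lt {p : ℝ≥0∞} (hp : 1 < p) (hptop : p ≠ ∞) : 1 < p.toReal := by
  rw [← ENNReal.toReal_one]
  exact (ENNReal.toReal_lt_toReal ENNReal.one_ne_top hptop).2 hp

lemma main_ineq (p : ℝ≥0∞) (hp : 1 < p) (q : ℝ) (hq : 0 < q)
    (ρ : ℕ → ℝ) (hρ : ∀ j, 1 < ρ j)
    (θ : ℝ) (hθ : θ = 1 - q * (1 - 1 / p.toReal))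
    (κ : ℕ → ℝ) (hκ : ∀ j, κ j = ρ j ^ θ)
    (a : MIdx → ℝ) (ha : ∀ ν, 0 ≤ a ν) :
    (∑' ν : MIdx, ENNReal.ofReal (mpow κ ν * a ν)) ≤
      lpF p (fun ν => mpow ρ ν * a ν) *
        (∑' ν : MIdx, ENNReal.ofReal (((mpow ρ ν)⁻¹) ^ q)) ^ (1 - 1 / p.toReal) := by
  have hρ0 : ∀ j, 0 < ρ j := fun j => lt_trans one_pos (hρ j)
  have hR : ∀ ν, 0 < mpow ρ ν := mpow_pos hρ0
  have hκρ : ∀ ν, mpow κ ν = mpow ρ ν ^ θ := by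
    intro ν
    rw [show κ = fun j => ρ j ^ θ from funext hκ, mpow_rpow (fun j => (hρ0 j).le)]
  have hsplit : ∀ ν, mpow κ ν * a ν = mpow ρ ν * a ν * mpow ρ ν ^ (θ - 1) := by
    intro ν
    rw [hκρ ν]
    have h5 : mpow ρ ν ^ θ = mpow ρ ν * mpow ρ ν ^ (θ - 1) := by
      nth_rewrite 2 [← Real.rpow_one (mpow ρ ν)]
      rw [← Real.rpow_add (hR ν)]
      norm_num
    rw [h5]; ring
  have hofr : ∀ ν, ENNReal.ofReal (mpow κ ν * a ν)
      = ENNReal.ofReal (mpow ρ ν * a ν) * ENNReal.ofReal (mpow ρ ν ^ (θ - 1)) := by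
    intro ν
    rw [hsplit ν, ENNReal.ofReal_mul (mul_nonneg (hR ν).le (ha ν))]
  have hinvq : ∀ ν, ((mpow ρ ν)⁻¹) ^ q = mpow ρ ν ^ (-q) := fun ν => by
    rw [Real.inv_rpow (hR ν).le, ← Real.rpow_neg (hR ν).le]
  by_cases hptop : p = ∞
  · subst hptop
    rw [lpF, if_pos rfl]
    rw [ENNReal.toReal_top, div_zero] at hθ ⊢
    have hθ' : θ - 1 = -q := by rw [hθ]; ring
    rw [sub_zero, ENNReal.rpow_one]
    calc (∑' ν : MIdx, ENNReal.ofReal (mpow κ ν * a ν))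
        = ∑' ν : MIdx, ENNReal.ofReal (mpow ρ ν * a ν)
            * ENNReal.ofReal (((mpow ρ ν)⁻¹) ^ q) := by
          refine tsum_congr fun ν => ?_
          rw [hofr ν, hθ', ← hinvq ν]
      _ ≤ ∑' ν : MIdx, (⨆ μ : MIdx, ENNReal.ofReal (mpow ρ μ * a μ))
            * ENNReal.ofReal (((mpow ρ ν)⁻¹) ^ q) :=
          ENNReal.tsum_le_tsum fun ν =>
            mul_le_mul_left (le_iSup (fun μ : MIdx => ENNReal.ofReal (mpow ρ μ * a μ)) ν) _
      _ = _ := ENNReal.tsum_mul_left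
  · have hP : 1 < p.toReal := one_lt_toReal_of_lt hp hptop
    set P := p.toReal with hPdef
    have hconj : P.HolderConjugate (Real.conjExponent P) := Real.HolderConjugate.conjExponent hP
    set P' := Real.conjExponent P with hP'def
    have hP'pos : 0 < P' := hconj.symm.pos
    have hinv : 1 - 1 / P = 1 / P' := by
      have h6 := hconj.inv_add_inv_eq_one
      rw [one_div, one_div]
      linarith
    have hexp : (θ - 1) * P' = -q := by
      rw [hθ, hinv]
      field_simp
      ring
    letI : MeasurableSpace MIdx := ⊤
    haveI : MeasurableSingletonClass MIdx := ⟨fun _ => trivial⟩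
    have holder := ENNReal.lintegral_mul_le_Lp_mul_Lq MeasureTheory.Measure.count hconj
      (f := fun ν : MIdx => ENNReal.ofReal (mpow ρ ν * a ν))
      (g := fun ν : MIdx => ENNReal.ofReal (mpow ρ ν ^ (θ - 1)))
      measurable_from_top.aemeasurable measurable_from_top.aemeasurable
    rw [MeasureTheory.lintegral_count, MeasureTheory.lintegral_count,
      MeasureTheory.lintegral_count] at holder
    simp only [Pi.mul_apply] at holder
    have g_eq : (∑' ν : MIdx, ENNReal.ofReal (mpow ρ ν ^ (θ - 1)) ^ P')
        = ∑' ν : MIdx, ENNReal.ofReal (((mpow ρ ν)⁻¹) ^ q) := by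
      refine tsum_congr fun ν => ?_
      rw [ENNReal.ofReal_rpow_of_nonneg (Real.rpow_nonneg (hR ν).le _) hP'pos.le,
        ← Real.rpow_mul (hR ν).le, hexp, ← hinvq ν]
    rw [g_eq] at holder
    rw [lpF, if_neg hptop, hinv]
    calc (∑' ν : MIdx, ENNReal.ofReal (mpow κ ν * a ν))
        = ∑' ν : MIdx, ENNReal.ofReal (mpow ρ ν * a ν)
            * ENNReal.ofReal (mpow ρ ν ^ (θ - 1)) := tsum_congr hofr
      _ ≤ _ := holder

/-- With `θ = 1 - q/p'` and `κ_j = ρ_j^θ`, for any nonnegative family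
`(a_ν)` one has `Σ_ν κ^ν a_ν ≤ ‖(ρ^ν a_ν)‖_{ℓ_p(F)} (Σ_ν ρ^{-qν})^{1/p'}`, the factor
`(Σ_ν ρ^{-qν})^{1/p'}` being finite; in particular `B_{ρ,p} ⊆ B_{κ,1}`.
Here `1/p' = 1 - 1/p.toReal` and the condition `q < p'` is encoded by
`0 < -1 + 1/p.toReal + 1/q`. -/
theorem kappa_embedding
    {X : Type*} [NormedAddCommGroup X] [NormedSpace ℝ X] [CompleteSpace X]
    (p : ℝ≥0∞) (hp : 1 < p)
    (q : ℝ) (hq : 0 < q) (hqp' : 0 < -1 + 1 / p.toReal + 1 / q)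
    (ρ : ℕ → ℝ) (hρ : ∀ j, 1 < ρ j)
    (hρq : Summable fun j => ((ρ j)⁻¹) ^ q)
    (θ : ℝ) (hθ : θ = 1 - q * (1 - 1 / p.toReal))
    (κ : ℕ → ℝ) (hκ : ∀ j, κ j = ρ j ^ θ)
    (a : MIdx → ℝ) (ha : ∀ ν, 0 ≤ a ν) :
    (∑' ν : MIdx, ENNReal.ofReal (((mpow ρ ν)⁻¹) ^ q)) ≠ ∞ ∧
    (∑' ν : MIdx, ENNReal.ofReal (mpow κ ν * a ν)) ≤
      lpF p (fun ν => mpow ρ ν * a ν) *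
        (∑' ν : MIdx, ENNReal.ofReal (((mpow ρ ν)⁻¹) ^ q)) ^ (1 - 1 / p.toReal) ∧
    (∀ t : MIdx → X, lpF p (fun ν => mpow ρ ν * ‖t ν‖) ≠ ∞ →
      Summable fun ν : MIdx => mpow κ ν * ‖t ν‖) := by
  have hρ0 : ∀ j, 0 < ρ j := fun j => lt_trans one_pos (hρ j)
  have h0 : ∀ j, 0 ≤ ((ρ j)⁻¹) ^ q := fun j => Real.rpow_nonneg (inv_nonneg.2 (hρ0 j).le) q
  have h1 : ∀ j, ((ρ j)⁻¹) ^ q < 1 := fun j =>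
    Real.rpow_lt_one (inv_nonneg.2 (hρ0 j).le) (inv_lt_one_of_one_lt₀ (hρ j)) hq
  have hg : ∀ ν : MIdx, ((mpow ρ ν)⁻¹) ^ q = mpow (fun j => ((ρ j)⁻¹) ^ q) ν := by
    intro ν
    rw [mpow_inv, ← mpow_rpow (fun j => inv_nonneg.2 (hρ0 j).le)]
  have hsum : Summable fun ν : MIdx => mpow (fun j => ((ρ j)⁻¹) ^ q) ν :=
    summable_mpow _ h0 h1 hρq
  have h1' : (∑' ν : MIdx, ENNReal.ofReal (((mpow ρ ν)⁻¹) ^ q)) ≠ ∞ := by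
    have he : (∑' ν : MIdx, ENNReal.ofReal (((mpow ρ ν)⁻¹) ^ q))
        = ENNReal.ofReal (∑' ν : MIdx, mpow (fun j => ((ρ j)⁻¹) ^ q) ν) := by
      rw [ENNReal.ofReal_tsum_of_nonneg (fun ν => mpow_nonneg h0 ν) hsum]
      exact tsum_congr fun ν => by rw [hg ν]
    rw [he]
    exact ENNReal.ofReal_ne_top
  refine ⟨h1', main_ineq p hp q hq ρ hρ θ hθ κ hκ a ha, ?_⟩
  intro t ht
  have hineq := main_ineq p hp q hq ρ hρ θ hθ κ hκ (fun ν => ‖t ν‖) fun ν => norm_nonneg _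
  have hexp0 : 0 ≤ 1 - 1 / p.toReal := by
    by_cases hptop : p = ∞
    · subst hptop
      rw [ENNReal.toReal_top, div_zero]
      norm_num
    · have hP : 1 < p.toReal := one_lt_toReal_of_lt hp hptop
      have : 1 / p.toReal < 1 := by
        rw [div_lt_one (by linarith)]
        linarith
      linarith
  have hfin : lpF p (fun ν => mpow ρ ν * ‖t ν‖) *
      (∑' ν : MIdx, ENNReal.ofReal (((mpow ρ ν)⁻¹) ^ q)) ^ (1 - 1 / p.toReal) ≠ ∞ :=
    ENNReal.mul_ne_top ht (ENNReal.rpow_ne_top_of_nonneg hexp0 h1')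
  have hne : (∑' ν : MIdx, ENNReal.ofReal (mpow κ ν * ‖t ν‖)) ≠ ∞ :=
    ne_top_of_le_ne_top hfin hineq
  have hκ0 : ∀ ν : MIdx, 0 ≤ mpow κ ν * ‖t ν‖ := fun ν =>
    mul_nonneg (mpow_nonneg (fun j => by rw [hκ j]; exact Real.rpow_nonneg (hρ0 j).le θ) ν)
      (norm_nonneg _)
  have hsn : Summable fun ν : MIdx => Real.toNNReal (mpow κ ν * ‖t ν‖) :=
    ENNReal.tsum_coe_ne_top_iff_summable.1 (by simpa [ENNReal.ofReal] using hne)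
  refine (NNReal.summable_coe.2 hsn).congr fun ν => ?_
  exact Real.coe_toNNReal _ (hκ0 ν)

end
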